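/- Closing the LEC inner loop around the Buck power stage yields the closed-loop relation v_o = k_FF·P11·v_c + P12·(s/(s+p_H))·ĩ_out: the command-to-output transfer function is unchanged and the disturbance-to-output transfer function is multiplied by the high-pass factor s/(s+p_H). -/

import Mathlib

lemma aux_ratfunc_ne {p : Polynomial ℝ} (h : p.coeff 0 ≠ 0) :
    algebraMap (Polynomial ℝ) (RatFunc ℝ) p ≠ 0 :=
  RatFunc.algebraMap_ne_zero (fun hp => h (by simp [hp]))

lemma aux_c_eq (a : ℝ) :
    algebraMap ℝ (RatFunc ℝ) a = algebraMap (Polynomial ℝ) (RatFunc ℝ) (Polynomial.C a) := by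
  simp [← RatFunc.algebraMap_C]

lemma aux_lin_ne (b e : ℝ) (he : e ≠ 0) :
    algebraMap ℝ (RatFunc ℝ) b * RatFunc.X + algebraMap ℝ (RatFunc ℝ) e ≠ 0 := by
  rw [aux_c_eq, aux_c_eq, ← RatFunc.algebraMap_X, ← map_mul, ← map_add]
  exact aux_ratfunc_ne (by simpa)

lemma aux_quad_ne (a b e : ℝ) (he : e ≠ 0) :
    algebraMap ℝ (RatFunc ℝ) a * RatFunc.X ^ 2 + algebraMap ℝ (RatFunc ℝ) b * RatFunc.X
      + algebraMap ℝ (RatFunc ℝ) e ≠ 0 := by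
  rw [aux_c_eq, aux_c_eq, aux_c_eq, ← RatFunc.algebraMap_X, ← map_pow, ← map_mul, ← map_mul,
    ← map_add, ← map_add]
  exact aux_ratfunc_ne (by simpa)


lemma aux_co (P Q G H k vc iout : RatFunc ℝ) (hk : k ≠ 0) (hH : H ≠ 0) :
    P * (k * (vc + -G / (k * H) * iout)) + Q * iout
      = P * k * vc + (Q - P * G / H) * iout := by
  field_simp
  ring

lemma aux_hp (x q p : RatFunc ℝ) (hp : p ≠ 0) (hq : q + p ≠ 0) (hH : 1 + q / p ≠ 0) :
    x - x / (1 + q / p) = x * (q / (q + p)) := by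
  have hq' : p + q ≠ 0 := by rwa [add_comm]
  field_simp
  ring

set_option maxHeartbeats 2000000 in
/-- Closing the LEC inner loop around the Buck power stage yields
v_o = k_FF·P11·v_c + P12·(s/(s+p_H))·ĩ_out: the command-to-output transfer
function is unchanged and the disturbance transfer function is multiplied
by the high-pass factor s/(s+p_H). -/
theorem lec_inner_loop_io (RL Rc Ri Cc Ll kFF pH : ℝ)
    (hRL : 0 < RL) (hRc : 0 < Rc) (hRi : 0 < Ri) (hC : 0 < Cc) (hL : 0 < Ll)
    (hk : 0 < kFF) (hp : 0 < pH)
    (vc iout vo iL vSW vinj : RatFunc ℝ) :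
    let s : RatFunc ℝ := RatFunc.X
    let c : ℝ → RatFunc ℝ := fun x => algebraMap ℝ (RatFunc ℝ) x
    let D : RatFunc ℝ :=
      c (Cc * Ll * (RL + Rc)) * s ^ 2
        + c (Ll + Cc * RL * (Rc + Ri) + Cc * Rc * Ri) * s + c (RL + Ri)
    let P11 : RatFunc ℝ := c RL * (1 + c (Cc * Rc) * s) / D
    let P22 : RatFunc ℝ := P11
    let P12 : RatFunc ℝ := -(c RL * (1 + c (Cc * Rc) * s) * (s * c Ll + c Ri)) / D
    let P21 : RatFunc ℝ := (c (Cc * (RL + Rc)) * s + 1) / D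
    let G1 : RatFunc ℝ := P21 / P11
    let G2 : RatFunc ℝ := P12 / P11
    vo = P11 * vSW + P12 * iout →
    iL = P21 * vSW + P22 * iout →
    vSW = c kFF * (vc + vinj) →
    vinj = (-G2 / (c kFF * (1 + s / c pH))) * (-G1 * vo + iL) →
    vo = P11 * c kFF * vc + P12 * (s / (s + c pH)) * iout := by
  intro s c D P11 P22 P12 P21 G1 G2 h1 h2 h3 h4
  -- nonvanishing facts
  have hkne : c kFF ≠ 0 := by
    simp only [c, ne_eq, map_eq_zero]; exact ne_of_gt hk
  have hpne : c pH ≠ 0 := by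
    simp only [c, ne_eq, map_eq_zero]; exact ne_of_gt hp
  have hD : D ≠ 0 := by
    simp only [D, c, s]
    exact aux_quad_ne _ _ _ (by positivity)
  have hone : (1 : RatFunc ℝ) + c (Cc * Rc) * s = c (Cc * Rc) * s + c 1 := by
    simp only [c, map_one]; ring
  have hN : c RL * (1 + c (Cc * Rc) * s) ≠ 0 := by
    apply mul_ne_zero
    · simp only [c, ne_eq, map_eq_zero]; exact ne_of_gt hRL
    · rw [hone]; exact aux_lin_ne _ _ one_ne_zero
  have hsp : s + c pH ≠ 0 := by
    have : s + c pH = c 1 * RatFunc.X + c pH := by simp [c, s]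
    rw [this]; exact aux_lin_ne _ _ (ne_of_gt hp)
  have hH : 1 + s / c pH ≠ 0 := by
    have h' : 1 + s / c pH = (c pH + s) / c pH := by
      rw [add_div, div_self hpne]
    rw [h']
    apply div_ne_zero _ hpne
    rw [add_comm]; exact hsp
  have hP11 : P11 ≠ 0 := div_ne_zero hN hD
  -- key polynomial identity: N1 + M*Q = D
  have hkey : c RL * (1 + c (Cc * Rc) * s) + (s * c Ll + c Ri) * (c (Cc * (RL + Rc)) * s + 1)
      = D := by
    simp only [D, c, map_mul, map_add, map_one]
    ring
  -- matrix "determinant" identity : P11^2 - P12*P21 = P11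
  have hdet : P11 * P11 - P12 * P21 = P11 := by
    have e1 : P11 * P11 - P12 * P21
        = (c RL * (1 + c (Cc * Rc) * s)
            * (c RL * (1 + c (Cc * Rc) * s) + (s * c Ll + c Ri) * (c (Cc * (RL + Rc)) * s + 1)))
          / (D * D) := by
      simp only [P11, P12, P21]
      rw [div_mul_div_comm, div_mul_div_comm, div_sub_div _ _ (mul_ne_zero hD hD) (mul_ne_zero hD hD)]
      rw [div_eq_div_iff (mul_ne_zero (mul_ne_zero hD hD) (mul_ne_zero hD hD)) (mul_ne_zero hD hD)]
      ring
    rw [e1, hkey]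
    have hDD : D / (D * D) = 1 / D := by
      rw [div_eq_div_iff (mul_ne_zero hD hD) hD]; ring
    rw [mul_div_assoc, hDD, mul_one_div]
  have hG1P11 : G1 * P11 = P21 := div_mul_cancel₀ _ hP11
  have hG2P11 : G2 * P11 = P12 := div_mul_cancel₀ _ hP11
  -- step 1: the bracket equals iout
  have hbr : -G1 * vo + iL = iout := by
    rw [h1, h2]
    have : -G1 * (P11 * vSW + P12 * iout) + (P21 * vSW + P22 * iout)
        = (P21 - G1 * P11) * vSW + (P11 - G1 * P12) * iout := by
      simp only [P22]; ring
    rw [this, hG1P11, sub_self, zero_mul, zero_add]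
    have h2' : P11 - G1 * P12 = 1 := by
      have e : P11 - G1 * P12 = (P11 * P11 - P12 * P21) / P11 := by
        rw [sub_div, mul_self_div_self, mul_comm P12 P21, mul_div_right_comm]
      rw [e, hdet, div_self hP11]
    rw [h2', one_mul]
  -- step 2: vinj in terms of iout
  have hv : vinj = -G2 / (c kFF * (1 + s / c pH)) * iout := by rw [h4, hbr]
  -- step 3: conclude
  rw [h1, h3, hv]
  have hco := aux_co P11 P12 G2 (1 + s / c pH) (c kFF) vc iout hkne hH
  rw [hco]
  have hfin : P12 - P11 * G2 / (1 + s / c pH) = P12 * (s / (s + c pH)) := by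
    rw [mul_comm P11 G2, hG2P11]
    exact aux_hp P12 s (c pH) hpne hsp hH
  rw [hfin]
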